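/- arXiv:1605.09093 — 4 statements merged into one kernel-verified Lean document; each statement's English description precedes it below -/
import Mathlib

section
/- Intermediate identity (equation (3.7) in the proof of Theorem 3.2). Let H = (h_e)_{e∈E} be a central essential hyperplane arrangement in ℝ^n and d ≥ 0 an integer. For G ⊆ E let Γ_G := {x ∈ (ℝ^d)^n : ‖h_e(x)‖₂ ≤ 1 if and only if e ∈ G}. Then ∫_{(ℝ^d)^n} Σ_{S ⊆ E spanning} ∏_{e∈S} (−𝟙[‖h_e(x)‖₂ ≤ 1]) dx = Σ_{G ⊆ E spanning} λ(Γ_G) · (Σ_{S ⊆ G, S spanning} (−1)^{|S|}), where λ is Lebesgue measure on (ℝ^d)^n; moreover λ(Γ_G) < ∞ for every spanning G. -/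
open MeasureTheory
open scoped ENNReal

noncomputable section

/-- Action of a linear functional with coefficient vector `a : Fin n → ℝ` on a
configuration of `n` points in a real vector space `V`:  `x ↦ ∑ i, a i • x i`. -/
def funcApp {n : ℕ} {V : Type*} [AddCommGroup V] [Module ℝ V]
    (a : Fin n → ℝ) (x : Fin n → V) : V := ∑ i, a i • x i

/-- `S ⊆ E` is spanning for the arrangement with coefficient vectors `a`:
the functionals `{h_e : e ∈ S}` span the dual of `ℝ^n` (identified with `ℝ^n`). -/
def IsSpanning {E : Type*} {n : ℕ} (a : E → Fin n → ℝ) (S : Finset E) : Prop :=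
  Submodule.span ℝ (a '' ↑S) = (⊤ : Submodule ℝ (Fin n → ℝ))

/-- A base is a spanning set of cardinality `n`. -/
def IsBase {E : Type*} {n : ℕ} (a : E → Fin n → ℝ) (S : Finset E) : Prop :=
  IsSpanning a S ∧ S.card = n

/-- The surface measure on the unit sphere of `ℝ^m`: the `(m-1)`-dimensional
Hausdorff measure restricted to the unit sphere. -/
def sphMeas (m : ℕ) : Measure (EuclideanSpace ℝ (Fin m)) :=
  (μH[(m : ℝ) - 1]).restrict (Metric.sphere 0 1)

/-- The space of `m`-dimensional `H`-polymers of type `S` (unit radii). -/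
def polymerBody {E : Type*} {n : ℕ} (m : ℕ) (a : E → Fin n → ℝ) (S : Finset E) :
    Set (Fin n → EuclideanSpace ℝ (Fin m)) :=
  {x | (∀ e ∈ S, ‖funcApp (a e) x‖ = 1) ∧ ∀ e ∉ S, 1 < ‖funcApp (a e) x‖}

/-- The map `Φ_S : x ↦ (h_e(x))_{e ∈ S}`. -/
def PhiMap {E : Type*} {n : ℕ} (m : ℕ) (a : E → Fin n → ℝ) (S : Finset E)
    (x : Fin n → EuclideanSpace ℝ (Fin m)) : ↥S → EuclideanSpace ℝ (Fin m) :=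
  fun e => funcApp (a e) x

/-- `vol(P^S(m)) := σ_m^{⊗S}(Φ_S(P^S(m)))`. -/
def polymerVol {E : Type*} {n : ℕ} (m : ℕ) (a : E → Fin n → ℝ) (S : Finset E) : ℝ≥0∞ :=
  Measure.pi (fun _ : ↥S => sphMeas m) (PhiMap m a S '' polymerBody m a S)

open scoped Classical in
/-- `vol(P_H(m))`: total volume of the space of `m`-dimensional `H`-polymers. -/
def polymerVolTotal {E : Type*} [Fintype E] {n : ℕ} (m : ℕ) (a : E → Fin n → ℝ) : ℝ≥0∞ :=
  ∑ S ∈ Finset.univ.filter (IsBase a), polymerVol m a S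

open scoped Classical in
/-- The integrand `Σ_{S spanning} ∏_{e∈S} (−𝟙[‖h_e(x)‖ ≤ 1])`. -/
def mayerIntegrand {E : Type*} [Fintype E] {n : ℕ} (d : ℕ) (a : E → Fin n → ℝ)
    (x : Fin n → EuclideanSpace ℝ (Fin d)) : ℝ :=
  ∑ S ∈ Finset.univ.filter (IsSpanning a),
    ∏ e ∈ S, (if ‖funcApp (a e) x‖ ≤ 1 then (-1 : ℝ) else 0)


/-- The region `Γ_G := {x : ‖h_e(x)‖ ≤ 1 iff e ∈ G}`. -/
def GammaSet {E : Type*} {n : ℕ} (d : ℕ) (a : E → Fin n → ℝ) (G : Finset E) :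
    Set (Fin n → EuclideanSpace ℝ (Fin d)) :=
  {x | ∀ e, ‖funcApp (a e) x‖ ≤ 1 ↔ e ∈ G}

section Aux
open scoped Classical
variable {E : Type*} {n : ℕ}

lemma funcApp_continuous {d : ℕ} (c : Fin n → ℝ) :
    Continuous fun x : Fin n → EuclideanSpace ℝ (Fin d) => funcApp c x := by
  unfold funcApp
  exact continuous_finset_sum _ fun i _ => (continuous_apply i).const_smul (c i)

lemma isSpanning_mono (a : E → Fin n → ℝ) {S G : Finset E} (h : S ⊆ G)
    (hS : IsSpanning a S) : IsSpanning a G := by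
  have := Submodule.span_mono (R := ℝ)
    (Set.image_mono (f := a) (by exact_mod_cast h : (S : Set E) ⊆ (G : Set E)))
  rw [hS] at this
  exact top_le_iff.1 this

lemma gammaSet_measurable [Fintype E] {d : ℕ} (a : E → Fin n → ℝ) (G : Finset E) :
    MeasurableSet (GammaSet d a G) := by
  have h : GammaSet d a G = ⋂ e, {x : Fin n → EuclideanSpace ℝ (Fin d) |
      ‖funcApp (a e) x‖ ≤ 1 ↔ e ∈ G} := by
    ext x; simp [GammaSet, Set.mem_iInter]
  rw [h]
  refine MeasurableSet.iInter fun e => ?_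
  have hm : MeasurableSet {x : Fin n → EuclideanSpace ℝ (Fin d) | ‖funcApp (a e) x‖ ≤ 1} :=
    (isClosed_le ((funcApp_continuous (a e)).norm) continuous_const).measurableSet
  by_cases he : e ∈ G
  · simpa [he] using hm
  · have h2 : {x : Fin n → EuclideanSpace ℝ (Fin d) | ‖funcApp (a e) x‖ ≤ 1 ↔ e ∈ G}
        = {x : Fin n → EuclideanSpace ℝ (Fin d) | ‖funcApp (a e) x‖ ≤ 1}ᶜ := by
      ext x; simp [he]
    rw [h2]; exact hm.compl

lemma gammaSet_volume_lt_top {d : ℕ} (a : E → Fin n → ℝ) {G : Finset E}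
    (hG : IsSpanning a G) : volume (GammaSet d a G) < ⊤ := by
  let Φ : (Fin n → EuclideanSpace ℝ (Fin d)) →ₗ[ℝ] (↥G → EuclideanSpace ℝ (Fin d)) :=
    { toFun := fun x e => funcApp (a e) x
      map_add' := fun x y => by
        funext e; simp [funcApp, smul_add, Finset.sum_add_distrib]
      map_smul' := fun c x => by
        funext e; simp [funcApp, Finset.smul_sum, smul_comm c] }
  have hker : LinearMap.ker Φ = ⊥ := by
    rw [LinearMap.ker_eq_bot']
    intro x hx
    let ψ : (Fin n → ℝ) →ₗ[ℝ] EuclideanSpace ℝ (Fin d) :=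
      ∑ i, (LinearMap.proj i : (Fin n → ℝ) →ₗ[ℝ] ℝ).smulRight (x i)
    have hψ : ∀ c : Fin n → ℝ, ψ c = funcApp c x := by
      intro c; simp [ψ, funcApp, LinearMap.sum_apply]
    have hsub : a '' (G : Set E) ⊆ (LinearMap.ker ψ : Set (Fin n → ℝ)) := by
      rintro - ⟨e, he, rfl⟩
      have : Φ x ⟨e, he⟩ = 0 := by rw [hx]; rfl
      exact LinearMap.mem_ker.2 ((hψ (a e)).trans this)
    have : Submodule.span ℝ (a '' (G : Set E)) ≤ LinearMap.ker ψ :=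
      Submodule.span_le.2 hsub
    rw [hG, top_le_iff] at this
    have hψ0 : ψ = 0 := LinearMap.ker_eq_top.1 this
    funext i
    have := hψ (Pi.single i 1)
    rw [hψ0] at this
    simp only [LinearMap.zero_apply] at this
    have hx0 : funcApp (Pi.single i (1:ℝ)) x = x i := by
      simp [funcApp, Pi.single_apply, ite_smul]
    rw [hx0] at this
    exact this.symm
  have hce := LinearMap.isClosedEmbedding_of_injective hker
  set K : Set (↥G → EuclideanSpace ℝ (Fin d)) :=
    Set.univ.pi fun _ => Metric.closedBall 0 1 with hK
  have hKc : IsCompact K := isCompact_univ_pi fun _ => isCompact_closedBall _ _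
  have hsubset : GammaSet d a G ⊆ Φ ⁻¹' K := by
    intro x hx
    intro e _
    have : ‖funcApp (a (e : E)) x‖ ≤ 1 := (hx (e : E)).2 e.2
    exact mem_closedBall_zero_iff.2 this
  calc volume (GammaSet d a G) ≤ volume (Φ ⁻¹' K) := measure_mono hsubset
    _ < ⊤ := (hce.isCompact_preimage hKc).measure_lt_top

lemma mayer_pointwise [Fintype E] {d : ℕ} (a : E → Fin n → ℝ)
    (x : Fin n → EuclideanSpace ℝ (Fin d)) :
    (∑ S ∈ Finset.univ.filter (IsSpanning a),
      ∏ e ∈ S, (if ‖funcApp (a e) x‖ ≤ 1 then (-1 : ℝ) else 0))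
    = ∑ G ∈ Finset.univ.filter (IsSpanning a),
        Set.indicator (GammaSet d a G)
          (fun _ => ∑ S ∈ G.powerset.filter (IsSpanning a), (-1:ℝ)^S.card) x := by
  set Gx : Finset E := Finset.univ.filter (fun e => ‖funcApp (a e) x‖ ≤ 1) with hGx
  have hmemGx : ∀ e, e ∈ Gx ↔ ‖funcApp (a e) x‖ ≤ 1 := by
    intro e; simp [hGx]
  have hmemΓ : ∀ G : Finset E, x ∈ GammaSet d a G ↔ G = Gx := by
    intro G
    constructor
    · intro h; ext e; rw [hmemGx]; exact (h e).symm
    · rintro rfl; intro e; exact (hmemGx e).symm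
  have hprod : ∀ S : Finset E,
      (∏ e ∈ S, (if ‖funcApp (a e) x‖ ≤ 1 then (-1 : ℝ) else 0))
        = if S ⊆ Gx then (-1:ℝ)^S.card else 0 := by
    intro S
    by_cases h : S ⊆ Gx
    · rw [if_pos h]
      rw [Finset.prod_congr rfl fun e he => if_pos ((hmemGx e).1 (h he))]
      simp
    · rw [if_neg h]
      obtain ⟨e, heS, heG⟩ := Finset.not_subset.1 h
      exact Finset.prod_eq_zero heS (if_neg (fun hc => heG ((hmemGx e).2 hc)))
  have hLHS : (∑ S ∈ Finset.univ.filter (IsSpanning a),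
      ∏ e ∈ S, (if ‖funcApp (a e) x‖ ≤ 1 then (-1 : ℝ) else 0))
      = ∑ S ∈ Gx.powerset.filter (IsSpanning a), (-1:ℝ)^S.card := by
    rw [Finset.sum_congr rfl fun S _ => hprod S]
    rw [← Finset.sum_filter]
    refine Finset.sum_congr ?_ fun _ _ => rfl
    ext S
    simp [Finset.mem_filter, Finset.mem_powerset, and_comm]
  rw [hLHS]
  have hRHS : (∑ G ∈ Finset.univ.filter (IsSpanning a),
        Set.indicator (GammaSet d a G)
          (fun _ => ∑ S ∈ G.powerset.filter (IsSpanning a), (-1:ℝ)^S.card) x)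
      = if Gx ∈ Finset.univ.filter (IsSpanning a)
          then ∑ S ∈ Gx.powerset.filter (IsSpanning a), (-1:ℝ)^S.card else 0 := by
    rw [← Finset.sum_ite_eq' (Finset.univ.filter (IsSpanning a)) Gx
          (fun G => ∑ S ∈ G.powerset.filter (IsSpanning a), (-1:ℝ)^S.card)]
    refine Finset.sum_congr rfl fun G _ => ?_
    rw [Set.indicator_apply]
    simp only [hmemΓ G]
  rw [hRHS]
  by_cases hsp : IsSpanning a Gx
  · rw [if_pos (by simp [hsp])]
  · rw [if_neg (by simp [hsp])]
    refine Finset.sum_eq_zero fun S hS => ?_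
    rw [Finset.mem_filter, Finset.mem_powerset] at hS
    exact absurd (isSpanning_mono a hS.1 hS.2) hsp

end Aux

open scoped Classical in
/-- **Intermediate identity** (equation (3.7) in the proof of Theorem 3.2). -/
theorem intermediate_identity
    {n : ℕ} (hn : 1 ≤ n) {E : Type*} [Fintype E] (a : E → Fin n → ℝ)
    (hnz : ∀ e, a e ≠ 0)
    (hess : Submodule.span ℝ (Set.range a) = (⊤ : Submodule ℝ (Fin n → ℝ)))
    (d : ℕ) :
    (∫ x, mayerIntegrand d a x)
      = (∑ G ∈ Finset.univ.filter (IsSpanning a),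
          (volume (GammaSet d a G)).toReal *
            ∑ S ∈ G.powerset.filter (IsSpanning a), (-1 : ℝ) ^ S.card)
    ∧ ∀ G : Finset E, IsSpanning a G → volume (GammaSet d a G) < ⊤ := by
  classical
  have hfin : ∀ G : Finset E, IsSpanning a G → volume (GammaSet d a G) < ⊤ :=
    fun G hG => gammaSet_volume_lt_top a hG
  refine ⟨?_, hfin⟩
  have h1 : (∫ x, mayerIntegrand d a x)
      = ∫ x, ∑ G ∈ Finset.univ.filter (IsSpanning a),
          Set.indicator (GammaSet d a G)
            (fun _ => ∑ S ∈ G.powerset.filter (IsSpanning a), (-1:ℝ)^S.card) x := by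
    unfold mayerIntegrand
    exact congrArg _ (funext fun x => mayer_pointwise a x)
  rw [h1, integral_finset_sum _ (fun G hG =>
    (integrable_indicator_iff (gammaSet_measurable a G)).2
      (integrableOn_const (hfin G (Finset.mem_filter.1 hG).2).ne))]
  refine Finset.sum_congr rfl fun G hG => ?_
  rw [integral_indicator (gammaSet_measurable a G), setIntegral_const, smul_eq_mul, measureReal_def]
end
end

section
/- Sign and monotonicity of generalized Mayer coefficients (used in the proof of Theorem 4.4). Let H = (h_e)_{e∈E} be a central essential hyperplane arrangement in ℝ^n, d ≥ 0 an integer, and let Λ ⊆ Λ′ ⊆ ℝ^d be Borel sets. Then 0 ≤ (−1)^n Σ_{S ⊆ E spanning} ∫_{Λ^n} ∏_{e∈S} (−𝟙[‖h_e(x)‖₂ ≤ 1]) dx ≤ (−1)^n Σ_{S ⊆ E spanning} ∫_{(Λ′)^n} ∏_{e∈S} (−𝟙[‖h_e(x)‖₂ ≤ 1]) dx, where Λ^n := {x ∈ (ℝ^d)^n : x_i ∈ Λ for all i}. In particular the generalized Mayer coefficient Σ_{S spanning} ∫_{(ℝ^d)^n} ∏_{e∈S} (−𝟙[‖h_e(x)‖₂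 ≤ 1]) dx has sign (−1)^n. -/
open MeasureTheory
open scoped ENNReal

noncomputable section

section Aux
open Finset
open scoped Classical

universe u v

def mf {E : Type u} {M : Type v} [AddCommGroup M] [Module ℝ M]
    (a : E → M) (T : Finset E) : ℝ :=
  ∑ S ∈ T.powerset, if Submodule.span ℝ (a '' ↑S) = ⊤ then (-1:ℝ)^S.card else 0

lemma mf_sign (k : ℕ) : ∀ {E : Type u} {M : Type v} [AddCommGroup M] [Module ℝ M]
    [FiniteDimensional ℝ M] (a : E → M) (T : Finset E), T.card = k →
    0 ≤ (-1:ℝ) ^ (Module.finrank ℝ M) * mf a T := by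
  induction k with
  | zero =>
    intro E M _ _ _ a T hT
    rw [Finset.card_eq_zero] at hT
    subst hT
    rw [mf, Finset.powerset_empty, Finset.sum_singleton]
    by_cases h : Submodule.span ℝ (a '' (↑(∅ : Finset E))) = ⊤
    · have hbot : (⊥ : Submodule ℝ M) = ⊤ := by
        rw [Finset.coe_empty, Set.image_empty, Submodule.span_empty] at h
        exact h
      have hsub : Subsingleton M := by
        constructor; intro x y
        have hx : x ∈ (⊥ : Submodule ℝ M) := by rw [hbot]; trivial
        have hy : y ∈ (⊥ : Submodule ℝ M) := by rw [hbot]; trivial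
        rw [Submodule.mem_bot] at hx hy; rw [hx, hy]
      have : Module.finrank ℝ M = 0 := Module.finrank_zero_of_subsingleton
      rw [this, if_pos h]
      simp
    · rw [if_neg h]; simp
  | succ k ih =>
    intro E M _ _ _ a T hT
    obtain ⟨e, he⟩ := Finset.card_pos.mp (by rw [hT]; exact Nat.succ_pos k)
    set T' := T.erase e with hT'
    have heT' : e ∉ T' := Finset.notMem_erase e T
    have hcard : T'.card = k := by
      rw [hT', Finset.card_erase_of_mem he, hT]; rfl
    have hTi : T = insert e T' := (Finset.insert_erase he).symm
    have hsplit : mf a T = mf a T' +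
        ∑ S ∈ T'.powerset,
          (if Submodule.span ℝ (a '' ↑(insert e S)) = ⊤ then -(-1:ℝ)^S.card else 0) := by
      rw [mf, hTi, Finset.powerset_insert, Finset.sum_union, mf]
      · congr 1
        rw [Finset.sum_image (fun S₁ h1 S₂ h2 h =>
          by
            have h1' : e ∉ S₁ := fun hc => heT' (Finset.mem_powerset.mp h1 hc)
            have h2' : e ∉ S₂ := fun hc => heT' (Finset.mem_powerset.mp h2 hc)
            rw [← Finset.erase_insert h1', ← Finset.erase_insert h2', h])]
        apply Finset.sum_congr rfl
        intro S hS
        have he' : e ∉ S := fun hc => heT' (Finset.mem_powerset.mp hS hc)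
        rw [Finset.card_insert_of_notMem he', pow_succ]
        ring_nf
      · rw [Finset.disjoint_right]
        intro S hS hS'
        obtain ⟨S', hS'mem, rfl⟩ := Finset.mem_image.mp hS
        exact (fun hc => heT' (Finset.mem_powerset.mp hS' hc)) (Finset.mem_insert_self e S')
    by_cases hz : a e = 0
    · have : ∀ S ∈ T'.powerset,
          (if Submodule.span ℝ (a '' ↑(insert e S)) = ⊤ then -(-1:ℝ)^S.card else 0)
          = -(if Submodule.span ℝ (a '' ↑S) = ⊤ then (-1:ℝ)^S.card else 0) := by
        intro S _
        rw [Finset.coe_insert, Set.image_insert_eq, hz, Submodule.span_insert_zero]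
        split <;> simp
      rw [hsplit, Finset.sum_congr rfl this, Finset.sum_neg_distrib, ← mf]
      simp
    · set N : Submodule ℝ M := ℝ ∙ (a e) with hN
      set b : E → (M ⧸ N) := fun x => N.mkQ (a x) with hb
      have hcond : ∀ S : Finset E,
          (Submodule.span ℝ (a '' ↑(insert e S)) = ⊤) ↔
          (Submodule.span ℝ (b '' ↑S) = ⊤) := by
        intro S
        rw [Finset.coe_insert, Set.image_insert_eq, Submodule.span_insert]
        have himg : b '' ↑S = N.mkQ '' (a '' ↑S) := by
          rw [Set.image_image]
        rw [himg, ← Submodule.map_span, Submodule.map_mkQ_eq_top]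
      have hsum2 : ∑ S ∈ T'.powerset,
          (if Submodule.span ℝ (a '' ↑(insert e S)) = ⊤ then -(-1:ℝ)^S.card else 0)
          = - mf b T' := by
        rw [mf, ← Finset.sum_neg_distrib]
        apply Finset.sum_congr rfl
        intro S _
        rw [if_congr (hcond S) rfl rfl]
        split <;> simp
      have hrank : Module.finrank ℝ M = Module.finrank ℝ (M ⧸ N) + 1 := by
        have h1 : Module.finrank ℝ (M ⧸ N) + Module.finrank ℝ N = Module.finrank ℝ M :=
          N.finrank_quotient_add_finrank
        rw [← h1, finrank_span_singleton hz]
      have h1 := ih a T' hcard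
      have h2 := ih b T' hcard
      rw [hsplit, hsum2, hrank]
      have : (-1:ℝ) ^ (Module.finrank ℝ (M ⧸ N) + 1) = -(-1:ℝ)^(Module.finrank ℝ (M⧸N)) := by
        rw [pow_succ]; ring
      rw [hrank, this] at h1
      rw [this]
      nlinarith


lemma integrable_term {E : Type*} {n : ℕ} (d : ℕ) (a : E → Fin n → ℝ) (S : Finset E)
    (hS : Submodule.span ℝ (a '' ↑S) = (⊤ : Submodule ℝ (Fin n → ℝ))) :
    Integrable (fun x : Fin n → EuclideanSpace ℝ (Fin d) =>
      ∏ e ∈ S, (if ‖funcApp (a e) x‖ ≤ 1 then (-1 : ℝ) else 0)) volume := by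
  set V := EuclideanSpace ℝ (Fin d)
  set L : (Fin n → V) →ₗ[ℝ] (↥S → V) :=
    LinearMap.pi (fun e : ↥S => ∑ i, a e.1 i • LinearMap.proj i) with hL
  have hLapp : ∀ (x : Fin n → V) (e : ↥S), L x e = funcApp (a e.1) x := by
    intro x e
    simp [hL, funcApp, LinearMap.pi_apply, LinearMap.sum_apply]
  have hinj : LinearMap.ker L = ⊥ := by
    rw [LinearMap.ker_eq_bot']
    intro x hx
    set ψ : (Fin n → ℝ) →ₗ[ℝ] V := ∑ i, (LinearMap.proj i).smulRight (x i) with hψ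
    have hψapp : ∀ c : Fin n → ℝ, ψ c = ∑ i, c i • x i := by
      intro c; simp [hψ, LinearMap.sum_apply]
    have hker : Submodule.span ℝ (a '' ↑S) ≤ LinearMap.ker ψ := by
      rw [Submodule.span_le]
      rintro v ⟨e, he, rfl⟩
      have : ψ (a e) = L x ⟨e, he⟩ := by rw [hψapp, hLapp]; rfl
      simp [LinearMap.mem_ker, this, hx]
    rw [hS, top_le_iff] at hker
    have hψ0 : ψ = 0 := LinearMap.ker_eq_top.mp hker
    funext j
    have : ψ (Pi.single j 1) = x j := by
      rw [hψapp]
      rw [Finset.sum_eq_single j]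
      · simp
      · intro i _ hij; rw [Pi.single_eq_of_ne hij]; simp
      · simp
    rw [hψ0] at this
    simpa using this.symm
  have hce : Topology.IsClosedEmbedding L := L.isClosedEmbedding_of_injective hinj
  set A : Set (Fin n → V) := ⇑L ⁻¹' (Metric.closedBall 0 1) with hA
  have hAmem : ∀ x, x ∈ A ↔ ∀ e ∈ S, ‖funcApp (a e) x‖ ≤ 1 := by
    intro x
    rw [hA, Set.mem_preimage, Metric.mem_closedBall, dist_zero_right,
      pi_norm_le_iff_of_nonneg zero_le_one]
    constructor
    · intro h e he; rw [← hLapp x ⟨e, he⟩]; exact h ⟨e, he⟩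
    · intro h e; rw [hLapp]; exact h e.1 e.2
  have hcomp : IsCompact A := hce.isCompact_preimage (isCompact_closedBall 0 1)
  have heq : (fun x : Fin n → V =>
      ∏ e ∈ S, (if ‖funcApp (a e) x‖ ≤ 1 then (-1 : ℝ) else 0))
      = Set.indicator A (fun _ => (-1 : ℝ) ^ S.card) := by
    funext x
    by_cases hx : x ∈ A
    · rw [Set.indicator_of_mem hx]
      rw [Finset.prod_congr rfl (fun e he => if_pos ((hAmem x).mp hx e he))]
      rw [Finset.prod_const]
    · rw [Set.indicator_of_notMem hx]
      rw [hAmem] at hx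
      push_neg at hx
      obtain ⟨e, he, hne⟩ := hx
      exact Finset.prod_eq_zero he (if_neg (not_le.mpr hne))
  rw [heq]
  exact (integrable_indicator_iff hcomp.isClosed.measurableSet).2
    (integrableOn_const hcomp.measure_lt_top.ne)

end Aux

open scoped Classical in
/-- **Sign and monotonicity of generalized Mayer coefficients.** -/
theorem mayer_coefficient_sign_and_monotone
    {n : ℕ} (hn : 1 ≤ n) {E : Type*} [Fintype E] (a : E → Fin n → ℝ)
    (hnz : ∀ e, a e ≠ 0)
    (hess : Submodule.span ℝ (Set.range a) = (⊤ : Submodule ℝ (Fin n → ℝ)))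
    (d : ℕ) (Λ Λ' : Set (EuclideanSpace ℝ (Fin d)))
    (hΛ : MeasurableSet Λ) (hΛ' : MeasurableSet Λ') (hsub : Λ ⊆ Λ') :
    (0 ≤ (-1 : ℝ) ^ n *
        ∑ S ∈ Finset.univ.filter (IsSpanning a),
          ∫ x in {x : Fin n → EuclideanSpace ℝ (Fin d) | ∀ i, x i ∈ Λ},
            ∏ e ∈ S, (if ‖funcApp (a e) x‖ ≤ 1 then (-1 : ℝ) else 0))
    ∧ ((-1 : ℝ) ^ n *
        ∑ S ∈ Finset.univ.filter (IsSpanning a),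
          ∫ x in {x : Fin n → EuclideanSpace ℝ (Fin d) | ∀ i, x i ∈ Λ},
            ∏ e ∈ S, (if ‖funcApp (a e) x‖ ≤ 1 then (-1 : ℝ) else 0)
        ≤ (-1 : ℝ) ^ n *
        ∑ S ∈ Finset.univ.filter (IsSpanning a),
          ∫ x in {x : Fin n → EuclideanSpace ℝ (Fin d) | ∀ i, x i ∈ Λ'},
            ∏ e ∈ S, (if ‖funcApp (a e) x‖ ≤ 1 then (-1 : ℝ) else 0))
    ∧ 0 ≤ (-1 : ℝ) ^ n *
        ∑ S ∈ Finset.univ.filter (IsSpanning a),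
          ∫ x : Fin n → EuclideanSpace ℝ (Fin d),
            ∏ e ∈ S, (if ‖funcApp (a e) x‖ ≤ 1 then (-1 : ℝ) else 0) := by
  classical
  set X := Fin n → EuclideanSpace ℝ (Fin d)
  set G : X → ℝ := fun x => ∑ S ∈ Finset.univ.filter (IsSpanning a),
    ∏ e ∈ S, (if ‖funcApp (a e) x‖ ≤ 1 then (-1 : ℝ) else 0) with hG
  -- pointwise identity and sign
  have hGpt : ∀ x : X, 0 ≤ (-1 : ℝ) ^ n * G x := by
    intro x
    set T : Finset E := Finset.univ.filter (fun e => ‖funcApp (a e) x‖ ≤ 1) with hT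
    have hprod : ∀ S : Finset E,
        (∏ e ∈ S, (if ‖funcApp (a e) x‖ ≤ 1 then (-1 : ℝ) else 0))
        = if S ⊆ T then (-1 : ℝ) ^ S.card else 0 := by
      intro S
      by_cases h : S ⊆ T
      · rw [if_pos h,
          Finset.prod_congr rfl (fun e he => if_pos (by
            have := h he; rw [hT, Finset.mem_filter] at this; exact this.2)),
          Finset.prod_const]
      · rw [if_neg h]
        obtain ⟨e, heS, heT⟩ := Finset.not_subset.mp h
        refine Finset.prod_eq_zero heS (if_neg ?_)
        intro hc
        exact heT (by rw [hT, Finset.mem_filter]; exact ⟨Finset.mem_univ e, hc⟩)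
    have hGx : G x = mf a T := by
      rw [hG]
      simp only [hprod]
      rw [mf]
      rw [show T.powerset = Finset.univ.filter (fun S => S ⊆ T) by
        ext S; simp [Finset.mem_powerset]]
      rw [Finset.sum_filter, Finset.sum_filter]
      apply Finset.sum_congr rfl
      intro S _
      unfold IsSpanning
      split_ifs <;> rfl
    rw [hGx]
    have := mf_sign T.card a T rfl
    rwa [Module.finrank_pi ℝ, Fintype.card_fin] at this
  -- integrability
  have hInt : ∀ S ∈ Finset.univ.filter (IsSpanning a),
      Integrable (fun x : X =>
        ∏ e ∈ S, (if ‖funcApp (a e) x‖ ≤ 1 then (-1 : ℝ) else 0)) volume := by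
    intro S hS
    exact integrable_term d a S (Finset.mem_filter.mp hS).2
  have hGint : Integrable G volume := by
    rw [hG]
    exact integrable_finset_sum _ hInt
  -- measurable sets
  have hset : ∀ (Λ₀ : Set (EuclideanSpace ℝ (Fin d))), MeasurableSet Λ₀ →
      MeasurableSet {x : X | ∀ i, x i ∈ Λ₀} := by
    intro Λ₀ h₀
    have : {x : X | ∀ i, x i ∈ Λ₀} = Set.pi Set.univ (fun _ => Λ₀) := by
      ext x; exact Set.mem_univ_pi.symm
    rw [this]
    exact MeasurableSet.univ_pi fun i => h₀
  -- sum-integral exchange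
  have hswap : ∀ s : Set X,
      (∑ S ∈ Finset.univ.filter (IsSpanning a),
        ∫ x in s, ∏ e ∈ S, (if ‖funcApp (a e) x‖ ≤ 1 then (-1 : ℝ) else 0))
      = ∫ x in s, G x := by
    intro s
    rw [hG]
    exact (integral_finset_sum _ (fun S hS => (hInt S hS).integrableOn)).symm
  have hmono : ∫ x in {x : X | ∀ i, x i ∈ Λ}, (-1 : ℝ) ^ n * G x
      ≤ ∫ x in {x : X | ∀ i, x i ∈ Λ'}, (-1 : ℝ) ^ n * G x := by
    apply setIntegral_mono_set
    · exact (hGint.const_mul _).integrableOn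
    · exact Filter.Eventually.of_forall fun x => hGpt x
    · refine HasSubset.Subset.eventuallyLE ?_
      intro x hx i
      exact hsub (hx i)
  refine ⟨?_, ?_, ?_⟩
  · rw [hswap, ← integral_const_mul]
    exact setIntegral_nonneg (hset Λ hΛ) (fun x _ => hGpt x)
  · rw [hswap, hswap, ← integral_const_mul, ← integral_const_mul]
    exact hmono
  · rw [show (∑ S ∈ Finset.univ.filter (IsSpanning a),
        ∫ x : X, ∏ e ∈ S, (if ‖funcApp (a e) x‖ ≤ 1 then (-1 : ℝ) else 0))
        = ∫ x : X, G x from (integral_finset_sum _ hInt).symm,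
      ← integral_const_mul]
    exact integral_nonneg (fun x => hGpt x)
end
end

section
/- Balanced partition function identity (equation (4.10)). Let d ≥ 1, n ≥ 1, and let Λ ⊆ ℝ^d be a bounded Borel set with Λ = −Λ. For a signed graph E on {1,…,n} and x = (x_1,…,x_n) ∈ (ℝ^d)^n set w(E, x) := ∏_{(i,j,s)∈E} (−𝟙[‖x_i − s·x_j‖₂ ≤ 1]). Then Σ_{E balanced signed graph on {1,…,n}} ∫_{Λ^n} w(E,x) dx = Σ_{H simple graph on {1,…,n}} 2^{n − c(H)} ∫_{Λ^n} ∏_{{i,j}∈E(H)} (−𝟙[‖x_i − x_j‖₂ ≤ 1]) dx, where c(H) is the number of connected components of H (isolated vertices counted) and Λ^n := {x : x_i ∈ Λ for all i}. -/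
open MeasureTheory
open scoped ENNReal Classical

noncomputable section

/-- A signed graph on a vertex set `V` is encoded as a finite set of pairs
`(e, s)` where `e ∈ Sym2 V` is an unordered pair of vertices and `s ∈ {±1} = ℤˣ`
is a sign; properness (no loops) is imposed separately via `¬ e.IsDiag`.
`IsBalancedSG G` says every cycle of `G` is balanced: there is no pair of parallel
edges of opposite signs (a two-edge cycle, always unbalanced), and every cycle on
`k ≥ 3` distinct vertices has sign product `+1`. -/
def IsBalancedSG {V : Type*} (G : Finset (Sym2 V × ℤˣ)) : Prop :=
  (∀ i j : V, i ≠ j → ¬ ((s(i, j), (1 : ℤˣ)) ∈ G ∧ (s(i, j), (-1 : ℤˣ)) ∈ G)) ∧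
  ∀ k : ℕ, ∀ v : Fin (k + 3) → V, Function.Injective v →
    ∀ σ : Fin (k + 3) → ℤˣ, (∀ m : Fin (k + 3), (s(v m, v (m + 1)), σ m) ∈ G) →
      (∏ m, σ m) = 1

/-- The Mayer factor `−𝟙[‖x_i − s·x_j‖ ≤ 1]` attached to a signed edge `({i,j}, s)`;
it is well defined on unordered pairs since `‖x_i − s·x_j‖ = ‖x_j − s·x_i‖` for
`s ∈ {±1}`. -/
def sgFactor {V : Type*} {d : ℕ} (x : V → EuclideanSpace ℝ (Fin d))
    (p : Sym2 V × ℤˣ) : ℝ :=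
  Sym2.lift ⟨fun i j => if ‖x i - (((p.2 : ℤ) : ℝ)) • x j‖ ≤ 1 then (-1 : ℝ) else 0, by
    intro i j
    beta_reduce
    rcases Int.units_eq_one_or p.2 with h | h <;> rw [h]
    · have h1 : (((1 : ℤˣ) : ℤ) : ℝ) = 1 := by norm_num
      rw [h1, one_smul, one_smul, norm_sub_rev]
    · have h1 : (((-1 : ℤˣ) : ℤ) : ℝ) = -1 := by norm_num
      rw [h1, neg_one_smul, neg_one_smul, sub_neg_eq_add, sub_neg_eq_add, add_comm]⟩ p.1

/-- The Mayer factor `−𝟙[‖x_i − x_j‖ ≤ 1]` attached to an unordered pair `{i,j}`. -/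
def pairFactor {V : Type*} {d : ℕ} (x : V → EuclideanSpace ℝ (Fin d)) :
    Sym2 V → ℝ :=
  Sym2.lift ⟨fun i j => if ‖x i - x j‖ ≤ 1 then (-1 : ℝ) else 0,
    fun i j => by beta_reduce; rw [norm_sub_rev]⟩

namespace BPI

/-! ### Unit algebra helpers -/

lemma units_sq (u : ℤˣ) : u * u = 1 := Int.units_mul_self u

lemma units_tele (g : ℕ → ℤˣ) (L : ℕ) :
    ∏ i ∈ Finset.range L, (g i * g (i + 1)) = g 0 * g L := by
  induction L with
  | zero => simp [units_sq]
  | succ L ih =>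
      rw [Finset.prod_range_succ, ih, mul_assoc, ← mul_assoc (g L),
        units_sq, one_mul]

/-! ### Signed graphs from switchings -/

def prodSign {V : Type*} (τ : V → ℤˣ) : Sym2 V → ℤˣ :=
  Sym2.lift ⟨fun i j => τ i * τ j, fun i j => mul_comm _ _⟩

@[simp] lemma prodSign_mk {V : Type*} (τ : V → ℤˣ) (i j : V) :
    prodSign τ s(i, j) = τ i * τ j := rfl

variable {V : Type*} [Fintype V] [DecidableEq V]

def sgOf (H : SimpleGraph V) (τ : V → ℤˣ) : Finset (Sym2 V × ℤˣ) :=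
  H.edgeFinset.image (fun e => (e, prodSign τ e))

lemma mem_sgOf {H : SimpleGraph V} {τ : V → ℤˣ} {e : Sym2 V} {u : ℤˣ} :
    (e, u) ∈ sgOf H τ ↔ e ∈ H.edgeFinset ∧ u = prodSign τ e := by
  constructor
  · intro h
    obtain ⟨e', he', h'⟩ := Finset.mem_image.1 h
    obtain ⟨rfl, rfl⟩ : e' = e ∧ prodSign τ e' = u := by
      constructor <;> [exact congrArg Prod.fst h'; exact congrArg Prod.snd h']
    exact ⟨he', rfl⟩
  · rintro ⟨he, rfl⟩
    exact Finset.mem_image.2 ⟨e, he, rfl⟩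

def und (G : Finset (Sym2 V × ℤˣ)) : SimpleGraph V where
  Adj i j := i ≠ j ∧ ∃ s, (s(i, j), s) ∈ G
  symm := ⟨by rintro i j ⟨h, s, hs⟩; exact ⟨h.symm, s, by rwa [Sym2.eq_swap]⟩⟩
  loopless := ⟨fun i h => h.1 rfl⟩

lemma und_sgOf (H : SimpleGraph V) (τ : V → ℤˣ) : und (sgOf H τ) = H := by
  ext i j
  show (i ≠ j ∧ ∃ s, (s(i, j), s) ∈ sgOf H τ) ↔ H.Adj i j
  constructor
  · rintro ⟨hne, s, hs⟩
    exact (SimpleGraph.mem_edgeSet _).1 (SimpleGraph.mem_edgeFinset.1 (mem_sgOf.1 hs).1)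
  · intro h
    exact ⟨h.ne, prodSign τ s(i, j),
      mem_sgOf.2 ⟨SimpleGraph.mem_edgeFinset.2 ((SimpleGraph.mem_edgeSet _).2 h), rfl⟩⟩

lemma proper_sgOf (H : SimpleGraph V) (τ : V → ℤˣ) :
    ∀ p ∈ sgOf H τ, ¬ p.1.IsDiag := by
  rintro ⟨e, u⟩ hp
  exact SimpleGraph.not_isDiag_of_mem_edgeSet H
    (SimpleGraph.mem_edgeFinset.1 (mem_sgOf.1 hp).1)

lemma balanced_sgOf (H : SimpleGraph V) (τ : V → ℤˣ) : IsBalancedSG (sgOf H τ) := by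
  constructor
  · rintro i j hne ⟨h1, h2⟩
    have e1 := (mem_sgOf.1 h1).2
    have e2 := (mem_sgOf.1 h2).2
    rw [← e1] at e2
    exact absurd e2 (by decide)
  · intro k v hv σ hσ
    have hm : ∀ m, σ m = τ (v m) * τ (v (m + 1)) := fun m => (mem_sgOf.1 (hσ m)).2
    calc ∏ m, σ m = ∏ m, (τ (v m) * τ (v (m + 1))) :=
          Finset.prod_congr rfl fun m _ => hm m
      _ = (∏ m, τ (v m)) * ∏ m, τ (v (m + 1)) := Finset.prod_mul_distrib
      _ = (∏ m, τ (v m)) * ∏ m, τ (v m) := by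
          congr 1
          exact Fintype.prod_equiv (Equiv.addRight (1 : Fin (k + 3)))
            (fun m => τ (v (m + 1))) (fun m => τ (v m)) (fun m => rfl)
      _ = 1 := units_sq _

lemma IsBalancedSG.mono {G G' : Finset (Sym2 V × ℤˣ)} (hsub : G' ⊆ G)
    (h : IsBalancedSG G) : IsBalancedSG G' :=
  ⟨fun i j hne hmem => h.1 i j hne ⟨hsub hmem.1, hsub hmem.2⟩,
    fun k v hv σ hσ => h.2 k v hv σ fun m => hsub (hσ m)⟩

/-! ### getVert injectivity for paths -/

lemma getVert_eq_get {W : Type*} {G : SimpleGraph W} {u v : W} (p : G.Walk u v)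
    (i : ℕ) (h : i < p.support.length) :
    p.getVert i = p.support[i] := by
  induction p generalizing i with
  | nil =>
      simp only [SimpleGraph.Walk.support_nil, List.length_singleton] at h
      obtain rfl : i = 0 := by omega
      simp
  | cons hadj q ih =>
      cases i with
      | zero => simp
      | succ k =>
          have h' : k < q.support.length := by
            simpa [SimpleGraph.Walk.support_cons] using h
          rw [SimpleGraph.Walk.getVert_cons_succ]
          rw [ih k h']
          simp [SimpleGraph.Walk.support_cons]

lemma getVert_inj {W : Type*} {G : SimpleGraph W} {u v : W} {p : G.Walk u v}
    (hp : p.IsPath) {a b : ℕ} (ha : a ≤ p.length) (hb : b ≤ p.length)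
    (h : p.getVert a = p.getVert b) : a = b := by
  have hl := p.length_support
  have ha' : a < p.support.length := by omega
  have hb' : b < p.support.length := by omega
  rw [getVert_eq_get p a ha', getVert_eq_get p b hb'] at h
  exact (hp.support_nodup.getElem_inj_iff).1 h

lemma sym2_exists_ne {W : Type*} {e : Sym2 W} (h : ¬ e.IsDiag) :
    ∃ i j, i ≠ j ∧ e = s(i, j) := by
  induction e using Sym2.ind with
  | _ i j => exact ⟨i, j, by simpa using h, rfl⟩

/-! ### Harary's theorem, hard direction -/

lemma exists_switching_aux (N : ℕ) : ∀ (H : SimpleGraph V) (σ : Sym2 V → ℤˣ),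
    H.edgeFinset.card ≤ N →
    IsBalancedSG (H.edgeFinset.image fun e => (e, σ e)) →
    ∃ τ : V → ℤˣ, ∀ e ∈ H.edgeFinset, σ e = prodSign τ e := by
  induction N with
  | zero =>
      intro H σ hcard _
      refine ⟨fun _ => 1, fun e he => absurd he ?_⟩
      have h0 : H.edgeFinset = ∅ :=
        Finset.card_eq_zero.1 (le_antisymm hcard (Nat.zero_le _))
      simp [h0]
  | succ N ih =>
      intro H σ hcard hbal
      rcases Finset.eq_empty_or_nonempty H.edgeFinset with hemp | ⟨e, he⟩
      · exact ⟨fun _ => 1, fun e he' => by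
          rw [hemp] at he'; exact absurd he' (Finset.notMem_empty e)⟩
      obtain ⟨i, j, hij, rfl⟩ := sym2_exists_ne
        (SimpleGraph.not_isDiag_of_mem_edgeSet H (SimpleGraph.mem_edgeFinset.1 he))
      have hadj : H.Adj i j := (SimpleGraph.mem_edgeSet _).1 (SimpleGraph.mem_edgeFinset.1 he)
      set H' := H.deleteEdges {s(i, j)} with hH'
      have hHfin : H'.edgeFinset = H.edgeFinset.erase s(i, j) := by
        ext f
        simp only [SimpleGraph.mem_edgeFinset, hH', SimpleGraph.edgeSet_deleteEdges,
          Set.mem_diff, Set.mem_singleton_iff, Finset.mem_erase, and_comm]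
      have hcard' : H'.edgeFinset.card ≤ N := by
        rw [hHfin]
        have := Finset.card_erase_of_mem he
        omega
      have hsub : H'.edgeFinset ⊆ H.edgeFinset := by
        rw [hHfin]; exact Finset.erase_subset _ _
      have hbal' : IsBalancedSG (H'.edgeFinset.image fun f => (f, σ f)) :=
        IsBalancedSG.mono (Finset.image_subset_image hsub) hbal
      obtain ⟨τ', hτ'⟩ := ih H' σ (by convert hcard') (by convert hbal')
      by_cases hreach : H'.Reachable i j
      · -- reachable case: close the path into a cycle
        obtain ⟨w⟩ := hreach
        set q : H'.Walk i j := (w.toPath : H'.Path i j).1 with hqdef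
        have hq : q.IsPath := (w.toPath : H'.Path i j).2
        have hL0 : q.length ≠ 0 := fun h0 => hadj.ne (SimpleGraph.Walk.eq_of_length_eq_zero h0)
        have hL1 : q.length ≠ 1 := by
          intro h1
          have h2 : H'.Adj (q.getVert 0) (q.getVert 1) := q.adj_getVert_succ (by omega)
          have h3 : q.getVert 1 = j := by rw [← h1]; exact q.getVert_length
          rw [q.getVert_zero, h3, hH', SimpleGraph.deleteEdges_adj] at h2
          exact h2.2 rfl
        obtain ⟨k, hk⟩ : ∃ k, q.length = k + 2 := ⟨q.length - 2, by omega⟩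
        set v : Fin (k + 3) → V := fun m => q.getVert m with hv
        have hvinj : Function.Injective v := by
          intro a b hab
          have ha : (a : ℕ) ≤ q.length := by have := a.isLt; omega
          have hb : (b : ℕ) ≤ q.length := by have := b.isLt; omega
          exact Fin.ext (getVert_inj hq ha hb hab)
        set σf : Fin (k + 3) → ℤˣ := fun m => σ (s(v m, v (m + 1))) with hσf
        have e1 : v (Fin.last (k + 2)) = j := by
          show q.getVert ((Fin.last (k + 2) : Fin (k + 3)) : ℕ) = j
          have hval : ((Fin.last (k + 2) : Fin (k + 3)) : ℕ) = k + 2 := rfl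
          rw [hval, ← hk]; exact q.getVert_length
        have e2 : v (Fin.last (k + 2) + 1) = i := by
          rw [Fin.last_add_one]; exact q.getVert_zero
        have hedgemid : ∀ m' : Fin (k + 2),
            s(q.getVert m', q.getVert ((m' : ℕ) + 1)) ∈ H'.edgeFinset := by
          intro m'
          have hadj' : H'.Adj (q.getVert m') (q.getVert ((m' : ℕ) + 1)) :=
            q.adj_getVert_succ (by have := m'.isLt; omega)
          exact SimpleGraph.mem_edgeFinset.2 ((SimpleGraph.mem_edgeSet _).2 hadj')
        have hvcast : ∀ m' : Fin (k + 2),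
            v m'.castSucc = q.getVert m' ∧ v (m'.castSucc + 1) = q.getVert ((m' : ℕ) + 1) := by
          intro m'
          constructor
          · show q.getVert ((m'.castSucc : Fin (k + 3)) : ℕ) = _
            rw [Fin.coe_castSucc]
          · rw [Fin.coeSucc_eq_succ]
            show q.getVert ((m'.succ : Fin (k + 3)) : ℕ) = _
            rw [Fin.val_succ]
        have hedge : ∀ m : Fin (k + 3), s(v m, v (m + 1)) ∈ H.edgeFinset := by
          intro m
          refine Fin.lastCases ?_ ?_ m
          · rw [e1, e2, Sym2.eq_swap]; exact he
          · intro m'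
            obtain ⟨hc1, hc2⟩ := hvcast m'
            rw [hc1, hc2]
            exact hsub (hedgemid m')
        have hprod : (∏ m, σf m) = 1 :=
          hbal.2 k v hvinj σf (fun m => Finset.mem_image.2 ⟨_, hedge m, rfl⟩)
        have hmid : ∀ m' : Fin (k + 2),
            σf m'.castSucc = τ' (q.getVert m') * τ' (q.getVert ((m' : ℕ) + 1)) := by
          intro m'
          obtain ⟨hc1, hc2⟩ := hvcast m'
          show σ (s(v m'.castSucc, v (m'.castSucc + 1))) = _
          rw [hc1, hc2, hτ' _ (by convert hedgemid m'), prodSign_mk]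
        have hlast : σf (Fin.last (k + 2)) = σ (s(i, j)) := by
          show σ (s(v (Fin.last (k + 2)), v (Fin.last (k + 2) + 1))) = _
          rw [e1, e2, Sym2.eq_swap]
        have hmidprod : (∏ m' : Fin (k + 2), σf m'.castSucc) = τ' i * τ' j := by
          rw [Finset.prod_congr rfl fun m' _ => hmid m']
          rw [Fin.prod_univ_eq_prod_range
            (fun m => τ' (q.getVert m) * τ' (q.getVert (m + 1))) (k + 2)]
          rw [units_tele (fun m => τ' (q.getVert m)) (k + 2)]
          rw [q.getVert_zero, ← hk, q.getVert_length]
        rw [Fin.prod_univ_castSucc, hmidprod, hlast] at hprod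
        have hσe : σ (s(i, j)) = τ' i * τ' j := by
          have h4 := inv_eq_of_mul_eq_one_right hprod
          rw [← h4]
          rcases Int.units_eq_one_or (τ' i) with h1 | h1 <;>
            rcases Int.units_eq_one_or (τ' j) with h2 | h2 <;> rw [h1, h2] <;> decide
        refine ⟨τ', fun f hf => ?_⟩
        by_cases hfe : f = s(i, j)
        · rw [hfe, hσe, prodSign_mk]
        · exact hτ' f (by convert (show f ∈ H'.edgeFinset by rw [hHfin]; exact Finset.mem_erase.2 ⟨hfe, hf⟩))
      · -- unreachable case: switch the component of j
        refine ⟨fun x => if H'.Reachable j x then (τ' i * τ' j * σ (s(i, j))) * τ' x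
          else τ' x, fun f hf => ?_⟩
        by_cases hfe : f = s(i, j)
        · have hri : ¬ H'.Reachable j i := fun h => hreach h.symm
          have hrj : H'.Reachable j j := SimpleGraph.Reachable.refl j
          rw [hfe, prodSign_mk]
          simp only [if_neg hri, if_pos hrj]
          rcases Int.units_eq_one_or (τ' i) with h1 | h1 <;>
            rcases Int.units_eq_one_or (τ' j) with h2 | h2 <;>
            rcases Int.units_eq_one_or (σ (s(i, j))) with h3 | h3 <;>
            rw [h1, h2, h3] <;> decide
        · have hf' : f ∈ H'.edgeFinset := by
            rw [hHfin]; exact Finset.mem_erase.2 ⟨hfe, hf⟩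
          obtain ⟨a, b, hab, rfl⟩ := sym2_exists_ne
            (SimpleGraph.not_isDiag_of_mem_edgeSet H' (SimpleGraph.mem_edgeFinset.1 hf'))
          have hadj' : H'.Adj a b := (SimpleGraph.mem_edgeSet _).1 (SimpleGraph.mem_edgeFinset.1 hf')
          have hστ' : σ (s(a, b)) = τ' a * τ' b := by
            rw [hτ' _ (by convert hf'), prodSign_mk]
          have hiff : H'.Reachable j a ↔ H'.Reachable j b :=
            ⟨fun h => h.trans hadj'.reachable, fun h => h.trans hadj'.symm.reachable⟩
          rw [prodSign_mk]
          by_cases hra : H'.Reachable j a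
          · rw [if_pos hra, if_pos (hiff.1 hra), hστ',
              mul_mul_mul_comm, units_sq, one_mul]
          · rw [if_neg hra, if_neg (fun h => hra (hiff.2 h)), hστ']

lemma exists_switching (H : SimpleGraph V) (σ : Sym2 V → ℤˣ)
    (hbal : IsBalancedSG (H.edgeFinset.image fun e => (e, σ e))) :
    ∃ τ : V → ℤˣ, ∀ e ∈ H.edgeFinset, σ e = prodSign τ e :=
  exists_switching_aux H.edgeFinset.card H σ le_rfl hbal

lemma eq_sgOf_of_balanced {G : Finset (Sym2 V × ℤˣ)}
    (hproper : ∀ p ∈ G, ¬ p.1.IsDiag) (hbal : IsBalancedSG G) :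
    ∃ τ : V → ℤˣ, G = sgOf (und G) τ := by
  set σ : Sym2 V → ℤˣ := fun e => if (e, (1 : ℤˣ)) ∈ G then 1 else -1 with hσ
  have himg : G = (und G).edgeFinset.image (fun e => (e, σ e)) := by
    ext ⟨f, u⟩
    constructor
    · intro hm
      obtain ⟨a, b, hab, rfl⟩ := sym2_exists_ne (hproper _ hm)
      have hedge : s(a, b) ∈ (und G).edgeFinset :=
        SimpleGraph.mem_edgeFinset.2 ((SimpleGraph.mem_edgeSet _).2 ⟨hab, u, hm⟩)
      have hu : u = σ (s(a, b)) := by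
        rcases Int.units_eq_one_or u with h | h <;> subst h
        · rw [hσ]; simp only [if_pos hm]
        · have hn : (s(a, b), (1 : ℤˣ)) ∉ G := fun h1 => hbal.1 a b hab ⟨h1, hm⟩
          rw [hσ]; simp only [if_neg hn]
      rw [hu]
      exact Finset.mem_image.2 ⟨_, hedge, rfl⟩
    · intro hm
      obtain ⟨f', hf', heq⟩ := Finset.mem_image.1 hm
      have hf1 : f' = f := congrArg Prod.fst heq
      have hueq : σ f' = u := congrArg Prod.snd heq
      subst hf1
      obtain ⟨a, b, hab, rfl⟩ := sym2_exists_ne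
        (SimpleGraph.not_isDiag_of_mem_edgeSet (und G) (SimpleGraph.mem_edgeFinset.1 hf'))
      have hAdj : (und G).Adj a b :=
        (SimpleGraph.mem_edgeSet _).1 (SimpleGraph.mem_edgeFinset.1 hf')
      obtain ⟨hne, s', hs'⟩ := hAdj
      rcases Int.units_eq_one_or s' with h | h <;> subst h
      · have : σ (s(a, b)) = 1 := by rw [hσ]; simp only [if_pos hs']
        rw [← hueq, this]; exact hs'
      · have hn : (s(a, b), (1 : ℤˣ)) ∉ G := fun h1 => hbal.1 a b hne ⟨h1, hs'⟩
        have : σ (s(a, b)) = -1 := by rw [hσ]; simp only [if_neg hn]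
        rw [← hueq, this]; exact hs'
  obtain ⟨τ, hτ⟩ := exists_switching (und G) σ (by rw [← himg]; exact hbal)
  exact ⟨τ, himg.trans (Finset.image_congr fun e he => by rw [hτ e he])⟩

/-! ### Counting switchings -/

lemma card_fiber (H : SimpleGraph V) (τ₀ : V → ℤˣ) :
    (Finset.univ.filter fun τ : V → ℤˣ => sgOf H τ = sgOf H τ₀).card
      = 2 ^ Fintype.card H.ConnectedComponent := by
  have hrep : ∀ c : H.ConnectedComponent,
      H.connectedComponentMk c.exists_rep.choose = c := fun c => c.exists_rep.choose_spec
  have sgOf_eq_iff : ∀ τ : V → ℤˣ, sgOf H τ = sgOf H τ₀ ↔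
      ∀ e ∈ H.edgeFinset, prodSign τ e = prodSign τ₀ e := by
    intro τ
    constructor
    · intro h e he
      have hmem : (e, prodSign τ e) ∈ sgOf H τ₀ := by
        rw [← h]; exact mem_sgOf.2 ⟨he, rfl⟩
      exact (mem_sgOf.1 hmem).2
    · intro h
      exact Finset.image_congr fun e he => by rw [h e he]
  have reach_delta : ∀ τ : V → ℤˣ, sgOf H τ = sgOf H τ₀ →
      ∀ a b : V, H.Reachable a b → τ a * τ₀ a = τ b * τ₀ b := by
    intro τ hτ
    have adj_delta : ∀ a b : V, H.Adj a b → τ a * τ₀ a = τ b * τ₀ b := by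
      intro a b hadj
      have h1 : prodSign τ s(a, b) = prodSign τ₀ s(a, b) :=
        (sgOf_eq_iff τ).1 hτ _ (SimpleGraph.mem_edgeFinset.2 ((SimpleGraph.mem_edgeSet _).2 hadj))
      rw [prodSign_mk, prodSign_mk] at h1
      rcases Int.units_eq_one_or (τ a) with h2 | h2 <;>
        rcases Int.units_eq_one_or (τ b) with h3 | h3 <;>
        rcases Int.units_eq_one_or (τ₀ a) with h4 | h4 <;>
        rcases Int.units_eq_one_or (τ₀ b) with h5 | h5 <;>
        rw [h2, h3, h4, h5] at h1 ⊢ <;> revert h1 <;> decide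
    intro a b hr
    obtain ⟨w⟩ := hr
    induction w with
    | nil => rfl
    | cons h' p ih => exact (adj_delta _ _ h').trans ih
  have hcard2 : (Finset.univ : Finset (H.ConnectedComponent → ℤˣ)).card
      = 2 ^ Fintype.card H.ConnectedComponent := by
    rw [Finset.card_univ, Fintype.card_fun]
    have h2 : Fintype.card ℤˣ = 2 := by decide
    rw [h2]
  rw [← hcard2]
  refine Finset.card_bij'
    (i := fun τ _ => fun c : H.ConnectedComponent =>
      τ c.exists_rep.choose * τ₀ c.exists_rep.choose)
    (j := fun g _ => fun x => g (H.connectedComponentMk x) * τ₀ x)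
    (fun τ hτ => Finset.mem_univ _) (fun g hg => ?_) (fun τ hτ => ?_) (fun g hg => ?_)
  · -- j g lands in the fiber
    refine Finset.mem_filter.2 ⟨Finset.mem_univ _, (sgOf_eq_iff _).2 fun e he => ?_⟩
    obtain ⟨a, b, hab, rfl⟩ := sym2_exists_ne
      (SimpleGraph.not_isDiag_of_mem_edgeSet H (SimpleGraph.mem_edgeFinset.1 he))
    have hadj : H.Adj a b := (SimpleGraph.mem_edgeSet _).1 (SimpleGraph.mem_edgeFinset.1 he)
    have hcc : H.connectedComponentMk a = H.connectedComponentMk b :=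
      SimpleGraph.ConnectedComponent.connectedComponentMk_eq_of_adj hadj
    rw [prodSign_mk, prodSign_mk]
    show g (H.connectedComponentMk a) * τ₀ a * (g (H.connectedComponentMk b) * τ₀ b)
        = τ₀ a * τ₀ b
    rw [hcc, mul_mul_mul_comm, units_sq, one_mul]
  · -- left inverse
    funext x
    have hfib := (Finset.mem_filter.1 hτ).2
    have hreach : H.Reachable
        ((H.connectedComponentMk x).exists_rep.choose) x :=
      SimpleGraph.ConnectedComponent.eq.1 (hrep (H.connectedComponentMk x))
    have := reach_delta τ hfib _ _ hreach
    show τ _ * τ₀ _ * τ₀ x = τ x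
    rw [this, mul_assoc, units_sq, mul_one]
  · -- right inverse
    funext c
    show g (H.connectedComponentMk c.exists_rep.choose) * τ₀ c.exists_rep.choose
        * τ₀ c.exists_rep.choose = g c
    rw [hrep c, mul_assoc, units_sq, mul_one]

lemma card_image_sgOf (H : SimpleGraph V) :
    (Finset.univ.filter fun G : Finset (Sym2 V × ℤˣ) =>
        ((∀ p ∈ G, ¬ p.1.IsDiag) ∧ IsBalancedSG G) ∧ und G = H).card
      = 2 ^ (Fintype.card V - Fintype.card H.ConnectedComponent) := by
  set c := Fintype.card H.ConnectedComponent with hc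
  set F := Finset.univ.filter (fun G : Finset (Sym2 V × ℤˣ) =>
    ((∀ p ∈ G, ¬ p.1.IsDiag) ∧ IsBalancedSG G) ∧ und G = H) with hF
  have hmaps : ∀ τ : V → ℤˣ, sgOf H τ ∈ F := fun τ =>
    Finset.mem_filter.2 ⟨Finset.mem_univ _,
      ⟨⟨proper_sgOf H τ, balanced_sgOf H τ⟩, und_sgOf H τ⟩⟩
  have hcardsum : (Finset.univ : Finset (V → ℤˣ)).card
      = ∑ G ∈ F, (Finset.univ.filter fun τ : V → ℤˣ => sgOf H τ = G).card :=
    Finset.card_eq_sum_card_fiberwise (fun τ _ => hmaps τ)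
  have hfib : ∀ G ∈ F, (Finset.univ.filter fun τ : V → ℤˣ => sgOf H τ = G).card = 2 ^ c := by
    intro G hG
    obtain ⟨⟨hp, hb⟩, hu⟩ := (Finset.mem_filter.1 hG).2
    obtain ⟨τ₀, rfl⟩ : ∃ τ₀, G = sgOf H τ₀ := by
      obtain ⟨τ₀, hτ₀⟩ := eq_sgOf_of_balanced hp hb
      exact ⟨τ₀, by rwa [hu] at hτ₀⟩
    exact card_fiber H τ₀
  have h2n : (Finset.univ : Finset (V → ℤˣ)).card = 2 ^ Fintype.card V := by
    rw [Finset.card_univ, Fintype.card_fun]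
    norm_num
  have hsum2 : F.card * 2 ^ c = 2 ^ Fintype.card V := by
    rw [← h2n, hcardsum, Finset.sum_congr rfl hfib, Finset.sum_const, smul_eq_mul]
  have hcle : c ≤ Fintype.card V :=
    Fintype.card_le_of_surjective (fun v => H.connectedComponentMk v)
      (fun cc => cc.exists_rep)
  have h3 : 2 ^ (Fintype.card V - c) * 2 ^ c = 2 ^ Fintype.card V := by
    rw [← pow_add]
    congr 1
    omega
  exact Nat.eq_of_mul_eq_mul_right (pow_pos (by norm_num) c)
    (hsum2.trans h3.symm)


/-! ### Change of variables -/

lemma unit_smul_norm {d : ℕ} (u : ℤˣ) (y : EuclideanSpace ℝ (Fin d)) :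
    ‖(((u : ℤ) : ℝ)) • y‖ = ‖y‖ := by
  rcases Int.units_eq_one_or u with h | h <;> rw [h] <;> simp

lemma integral_sgOf {d : ℕ} (Λ : Set (EuclideanSpace ℝ (Fin d))) (hsym : Λ = -Λ)
    (H : SimpleGraph V) (τ : V → ℤˣ) :
    ∫ x in {x : V → EuclideanSpace ℝ (Fin d) | ∀ i, x i ∈ Λ},
        ∏ p ∈ sgOf H τ, sgFactor x p
      = ∫ x in {x : V → EuclideanSpace ℝ (Fin d) | ∀ i, x i ∈ Λ},
        ∏ e ∈ H.edgeFinset, pairFactor x e := by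
  let E := EuclideanSpace ℝ (Fin d)
  set S := {x : V → E | ∀ i, x i ∈ Λ} with hSdef
  set T : (V → E) → (V → E) := fun x i => (((τ i : ℤ) : ℝ)) • x i with hT
  have hcast2 : ∀ u : ℤˣ, (((u : ℤ) : ℝ)) * (((u : ℤ) : ℝ)) = 1 := by
    intro u
    rcases Int.units_eq_one_or u with h | h <;> rw [h] <;> norm_num
  have hTT : ∀ x, T (T x) = x := by
    intro x
    funext i
    show (((τ i : ℤ) : ℝ)) • ((((τ i : ℤ) : ℝ)) • x i) = x i
    rw [smul_smul, hcast2, one_smul]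
  have Tmeas : Measurable T :=
    measurable_pi_lambda _ fun i => by
      exact ((measurable_pi_apply i).const_smul (((τ i : ℤ) : ℝ)) :
        Measurable fun c : V → E => (((τ i : ℤ) : ℝ)) • c i)
  have hemb : MeasurableEmbedding T :=
    MeasurableEquiv.measurableEmbedding ⟨⟨T, T, hTT, hTT⟩, Tmeas, Tmeas⟩
  have hmp : MeasurePreserving T volume volume := by
    refine ⟨Tmeas, ?_⟩
    have hvol : (volume : Measure (V → E)) = Measure.pi fun _ => volume := volume_pi
    rw [hvol]
    refine (Measure.pi_eq fun s hs => ?_).symm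
    rw [Measure.map_apply Tmeas (MeasurableSet.univ_pi hs)]
    have hpre : T ⁻¹' Set.univ.pi s
        = Set.univ.pi fun i => (fun y : E => (((τ i : ℤ) : ℝ)) • y) ⁻¹' s i := by
      ext x
      simp [Set.mem_pi, hT]
    rw [hpre, Measure.pi_pi]
    refine Finset.prod_congr rfl fun i _ => ?_
    rcases Int.units_eq_one_or (τ i) with h | h <;> rw [h]
    · have hid : (fun y : E => ((((1 : ℤˣ) : ℤ) : ℝ)) • y) = id := by
        funext y; norm_num
      rw [hid, Set.preimage_id]
    · have hneg : (fun y : E => ((((-1 : ℤˣ) : ℤ) : ℝ)) • y) = (Neg.neg : E → E) := by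
        funext y
        have : ((((-1 : ℤˣ) : ℤ) : ℝ)) = -1 := by norm_num
        rw [this, neg_one_smul]
      rw [hneg, Set.neg_preimage, Measure.measure_neg]
  have hcoord : ∀ (i : V) (y : E), (((τ i : ℤ) : ℝ)) • y ∈ Λ ↔ y ∈ Λ := by
    intro i y
    rcases Int.units_eq_one_or (τ i) with h | h <;> rw [h]
    · have h1 : ((((1 : ℤˣ) : ℤ) : ℝ)) = 1 := by norm_num
      rw [h1, one_smul]
    · have h1 : ((((-1 : ℤˣ) : ℤ) : ℝ)) = -1 := by norm_num
      rw [h1, neg_one_smul]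
      conv_rhs => rw [hsym]
      exact Set.mem_neg.symm
  have hS : T ⁻¹' S = S := by
    ext x
    simp only [Set.mem_preimage, hSdef, Set.mem_setOf_eq]
    exact ⟨fun h i => (hcoord i (x i)).1 (h i), fun h i => (hcoord i (x i)).2 (h i)⟩
  have hint := hmp.setIntegral_preimage_emb hemb
    (fun y => ∏ e ∈ H.edgeFinset, pairFactor y e) S
  rw [hS] at hint
  rw [← hint]
  refine integral_congr_ae (Filter.Eventually.of_forall fun x => ?_)
  show ∏ p ∈ sgOf H τ, sgFactor x p = ∏ e ∈ H.edgeFinset, pairFactor (T x) e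
  have hprod : ∏ p ∈ sgOf H τ, sgFactor x p
      = ∏ e ∈ H.edgeFinset, sgFactor x (e, prodSign τ e) :=
    Finset.prod_image fun _ _ _ _ h => congrArg Prod.fst h
  rw [hprod]
  refine Finset.prod_congr rfl fun e he => ?_
  obtain ⟨a, b, hab, rfl⟩ := sym2_exists_ne
    (SimpleGraph.not_isDiag_of_mem_edgeSet H (SimpleGraph.mem_edgeFinset.1 he))
  have h1 : sgFactor x (s(a, b), prodSign τ s(a, b))
      = if ‖x a - (((τ a * τ b : ℤˣ) : ℤ) : ℝ) • x b‖ ≤ 1 then (-1 : ℝ) else 0 := by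
    simp [sgFactor]
  have h2 : pairFactor (T x) s(a, b)
      = if ‖(((τ a : ℤ) : ℝ)) • x a - (((τ b : ℤ) : ℝ)) • x b‖ ≤ 1 then (-1 : ℝ) else 0 := by
    simp [pairFactor, hT]
  have hnorm : ‖x a - (((τ a * τ b : ℤˣ) : ℤ) : ℝ) • x b‖
      = ‖(((τ a : ℤ) : ℝ)) • x a - (((τ b : ℤ) : ℝ)) • x b‖ := by
    calc ‖x a - (((τ a * τ b : ℤˣ) : ℤ) : ℝ) • x b‖
        = ‖(((τ a : ℤ) : ℝ)) • (x a - (((τ a * τ b : ℤˣ) : ℤ) : ℝ) • x b)‖ :=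
          (unit_smul_norm (τ a) _).symm
      _ = ‖(((τ a : ℤ) : ℝ)) • x a - (((τ b : ℤ) : ℝ)) • x b‖ := by
          rw [smul_sub, smul_smul]
          have hm : (((τ a : ℤ) : ℝ)) * ((((τ a * τ b : ℤˣ) : ℤ) : ℝ)) = ((τ b : ℤ) : ℝ) := by
            push_cast [Units.val_mul]
            rw [← mul_assoc, hcast2, one_mul]
          rw [hm]
  rw [h1, h2, hnorm]

end BPI

/-- **Balanced partition function identity** (equation (4.10)). -/
theorem balanced_partition_identity (d n : ℕ) (hd : 1 ≤ d) (hn : 1 ≤ n)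
    (Λ : Set (EuclideanSpace ℝ (Fin d))) (hmeas : MeasurableSet Λ)
    (hbdd : Bornology.IsBounded Λ) (hsym : Λ = -Λ) :
    (∑ G ∈ Finset.univ.filter (fun G : Finset (Sym2 (Fin n) × ℤˣ) =>
        (∀ p ∈ G, ¬ p.1.IsDiag) ∧ IsBalancedSG G),
      ∫ x in {x : Fin n → EuclideanSpace ℝ (Fin d) | ∀ i, x i ∈ Λ},
        ∏ p ∈ G, sgFactor x p)
    = ∑ H : SimpleGraph (Fin n),
        (2 : ℝ) ^ (n - Fintype.card H.ConnectedComponent) *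
          ∫ x in {x : Fin n → EuclideanSpace ℝ (Fin d) | ∀ i, x i ∈ Λ},
            ∏ e ∈ H.edgeFinset, pairFactor x e := by
  have key := Finset.sum_fiberwise
    (Finset.univ.filter (fun G : Finset (Sym2 (Fin n) × ℤˣ) =>
        (∀ p ∈ G, ¬ p.1.IsDiag) ∧ IsBalancedSG G))
    (fun G => BPI.und G)
    (fun G => ∫ x in {x : Fin n → EuclideanSpace ℝ (Fin d) | ∀ i, x i ∈ Λ},
        ∏ p ∈ G, sgFactor x p)
  rw [← key]
  refine Finset.sum_congr rfl fun H _ => ?_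
  rw [Finset.filter_filter]
  have hcongr : ∀ G ∈ Finset.univ.filter (fun G : Finset (Sym2 (Fin n) × ℤˣ) =>
      ((∀ p ∈ G, ¬ p.1.IsDiag) ∧ IsBalancedSG G) ∧ BPI.und G = H),
      (∫ x in {x : Fin n → EuclideanSpace ℝ (Fin d) | ∀ i, x i ∈ Λ}, ∏ p ∈ G, sgFactor x p)
        = ∫ x in {x : Fin n → EuclideanSpace ℝ (Fin d) | ∀ i, x i ∈ Λ},
            ∏ e ∈ H.edgeFinset, pairFactor x e := by
    intro G hG
    obtain ⟨⟨hp, hb⟩, hu⟩ := (Finset.mem_filter.1 hG).2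
    obtain ⟨τ, hτ⟩ := BPI.eq_sgOf_of_balanced hp hb
    rw [hu] at hτ
    rw [hτ]
    exact BPI.integral_sgOf Λ hsym H τ
  rw [Finset.sum_congr rfl hcongr, Finset.sum_const, BPI.card_image_sgOf H, nsmul_eq_mul]
  rw [Fintype.card_fin]
  push_cast
  ring
end
end

section
/- Proposition 2.6 (rotation invariance of the law of H-polymers). Let H = (h_e)_{e∈E} be a central essential hyperplane arrangement in ℝ^n and let d ≥ 1 be an integer. Let R : ℝ^d → ℝ^d be a linear isometry and let ρ_R : (ℝ^d)^n → (ℝ^d)^n apply R to each coordinate, ρ_R(x_1,…,x_n) = (Rx_1,…,Rx_n). Then for every base S: (i) ρ_R maps P^S(d) bijectively onto P^S(d), and (ii) for every Borel set A ⊆ (ℝ^d)^n, σ_d^{⊗S}(Φ_S(ρ_R(A) ∩ P^S(d))) = σ_d^{⊗S}(Φ_S(A ∩ P^S(d))). -/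
open MeasureTheory
open scoped ENNReal

noncomputable section

/-- Invariance of a finite product measure under a coordinatewise measurable
equivalence each of whose factors leaves the factor measure invariant (on all sets). -/
lemma pi_image_invariance {ι : Type*} [Fintype ι] {β : Type*} [MeasurableSpace β]
    (ν : Measure β) (e : β ≃ᵐ β) (hinv : ∀ t : Set β, ν (⇑e '' t) = ν t)
    (s : Set (ι → β)) :
    Measure.pi (fun _ : ι => ν) ((fun x i => e (x i)) '' s)
      = Measure.pi (fun _ : ι => ν) s := by
  classical
  set F : (ι → β) ≃ᵐ (ι → β) := MeasurableEquiv.piCongrRight fun _ => e with hF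
  have hFcoe : ⇑F = fun x i => e (x i) := rfl
  -- outer-measure invariance
  have hpre : ∀ u : Set (ι → β),
      piPremeasure (fun _ : ι => ν.toOuterMeasure) (⇑F '' u)
        = piPremeasure (fun _ : ι => ν.toOuterMeasure) u := by
    intro u
    simp only [piPremeasure]
    refine Finset.prod_congr rfl fun i _ => ?_
    have h1 : Function.eval i '' (⇑F '' u) = ⇑e '' (Function.eval i '' u) := by
      rw [Set.image_image, Set.image_image]
      rfl
    rw [h1]
    exact hinv _
  have houter : ∀ u : Set (ι → β),
      OuterMeasure.pi (fun _ : ι => ν.toOuterMeasure) (⇑F '' u)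
        = OuterMeasure.pi (fun _ : ι => ν.toOuterMeasure) u := by
    intro u
    have hc := OuterMeasure.comap_boundedBy (m := piPremeasure fun _ : ι => ν.toOuterMeasure)
      (⇑F) (Or.inr F.surjective)
    rw [show (fun s => piPremeasure (fun _ : ι => ν.toOuterMeasure) (⇑F '' s))
        = piPremeasure (fun _ : ι => ν.toOuterMeasure) from funext hpre] at hc
    have h2 : OuterMeasure.comap (⇑F) (OuterMeasure.pi fun _ : ι => ν.toOuterMeasure)
        = OuterMeasure.pi fun _ : ι => ν.toOuterMeasure := hc
    rw [← OuterMeasure.comap_apply, h2]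
  -- measure-level invariance on measurable sets
  have hmeaseq : ∀ u : Set (ι → β), MeasurableSet u →
      Measure.pi (fun _ : ι => ν) u
        = OuterMeasure.pi (fun _ : ι => ν.toOuterMeasure) u := by
    intro u hu
    rw [Measure.pi_def]
    exact toMeasure_apply _ _ hu
  have hmap : Measure.map F.symm (Measure.pi (fun _ : ι => ν))
      = Measure.pi (fun _ : ι => ν) := by
    ext t ht
    rw [Measure.map_apply F.symm.measurable ht]
    rw [MeasurableEquiv.preimage_symm, hmeaseq _ (F.measurableSet_image.mpr ht),
      houter, ← hmeaseq _ ht]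
  calc Measure.pi (fun _ : ι => ν) ((fun x i => e (x i)) '' s)
      = Measure.pi (fun _ : ι => ν) (⇑F.symm ⁻¹' s) := by
        rw [← hFcoe, F.image_eq_preimage_symm]
    _ = (Measure.map F.symm (Measure.pi (fun _ : ι => ν))) s :=
        (MeasurableEquiv.map_apply F.symm s).symm
    _ = Measure.pi (fun _ : ι => ν) s := by rw [hmap]

/-- The spherical measure is invariant under linear isometric equivalences. -/
lemma sphMeas_image_invariance {d : ℕ}
    (R' : EuclideanSpace ℝ (Fin d) ≃ₗᵢ[ℝ] EuclideanSpace ℝ (Fin d))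
    (t : Set (EuclideanSpace ℝ (Fin d))) :
    sphMeas d (⇑R' '' t) = sphMeas d t := by
  have hsph : ⇑R' ⁻¹' (Metric.sphere (0 : EuclideanSpace ℝ (Fin d)) 1)
      = Metric.sphere 0 1 := by
    ext x
    simp [mem_sphere_iff_norm]
  have hmeasSphere : MeasurableSet (Metric.sphere (0 : EuclideanSpace ℝ (Fin d)) 1) :=
    Metric.isClosed_sphere.measurableSet
  have hH : ∀ u : Set (EuclideanSpace ℝ (Fin d)),
      μH[(d : ℝ) - 1] (⇑R' '' u) = μH[(d : ℝ) - 1] u := fun u =>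
    R'.isometry.hausdorffMeasure_image (Or.inr R'.surjective) u
  rw [sphMeas, Measure.restrict_apply' hmeasSphere, Measure.restrict_apply' hmeasSphere]
  have h3 : ⇑R' '' (t ∩ ⇑R' ⁻¹' (Metric.sphere 0 1)) = ⇑R' '' t ∩ Metric.sphere 0 1 :=
    Set.image_inter_preimage _ _ _
  rw [hsph] at h3
  rw [← h3, hH]

/-- **Rotation invariance of the law of `H`-polymers** (Proposition 2.6). -/
theorem rotation_invariance_of_polymer_law
    {n : ℕ} (hn : 1 ≤ n) {E : Type*} [Fintype E] (a : E → Fin n → ℝ)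
    (hnz : ∀ e, a e ≠ 0)
    (hess : Submodule.span ℝ (Set.range a) = (⊤ : Submodule ℝ (Fin n → ℝ)))
    (d : ℕ) (hd : 1 ≤ d)
    (R : EuclideanSpace ℝ (Fin d) →ₗᵢ[ℝ] EuclideanSpace ℝ (Fin d))
    (S : Finset E) (hS : IsBase a S) :
    Set.BijOn (fun x (i : Fin n) => R (x i)) (polymerBody d a S) (polymerBody d a S)
    ∧ ∀ A : Set (Fin n → EuclideanSpace ℝ (Fin d)), MeasurableSet A →
        Measure.pi (fun _ : ↥S => sphMeas d)
            (PhiMap d a S '' ((fun x (i : Fin n) => R (x i)) '' A ∩ polymerBody d a S))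
          = Measure.pi (fun _ : ↥S => sphMeas d)
              (PhiMap d a S '' (A ∩ polymerBody d a S)) := by
  classical
  set R' : EuclideanSpace ℝ (Fin d) ≃ₗᵢ[ℝ] EuclideanSpace ℝ (Fin d) :=
    R.toLinearIsometryEquiv rfl with hR'
  have hR'R : ∀ v, R' v = R v := fun v => rfl
  set ρ : (Fin n → EuclideanSpace ℝ (Fin d)) → (Fin n → EuclideanSpace ℝ (Fin d)) :=
    fun x i => R (x i) with hρ
  have hfunc : ∀ (e : E) (x : Fin n → EuclideanSpace ℝ (Fin d)),
      funcApp (a e) (ρ x) = R (funcApp (a e) x) := by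
    intro e x
    simp only [funcApp, hρ, map_sum, _root_.map_smul]
  have hnorm : ∀ (e : E) (x : Fin n → EuclideanSpace ℝ (Fin d)),
      ‖funcApp (a e) (ρ x)‖ = ‖funcApp (a e) x‖ := by
    intro e x
    rw [hfunc]
    exact R.norm_map _
  have hPmem : ∀ x, ρ x ∈ polymerBody d a S ↔ x ∈ polymerBody d a S := by
    intro x
    simp only [polymerBody, Set.mem_setOf_eq, hnorm]
  have hinj : Function.Injective ρ := by
    intro x y h
    funext i
    exact R.injective (congrFun h i)
  have hbij : Set.BijOn ρ (polymerBody d a S) (polymerBody d a S) := by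
    refine ⟨fun x hx => (hPmem x).mpr hx, hinj.injOn, ?_⟩
    intro x hx
    refine ⟨fun i => R'.symm (x i), ?_, ?_⟩
    · have hρx : ρ (fun i => R'.symm (x i)) = x := by
        funext i
        simp only [hρ, ← hR'R, R'.apply_symm_apply]
      rw [← hPmem]
      rw [hρx]
      exact hx
    · funext i
      simp only [hρ, ← hR'R, R'.apply_symm_apply]
  refine ⟨hbij, fun A _ => ?_⟩
  have hset : ρ '' A ∩ polymerBody d a S = ρ '' (A ∩ polymerBody d a S) := by
    rw [Set.image_inter hinj, hbij.image_eq]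
  have him : PhiMap d a S '' (ρ '' (A ∩ polymerBody d a S))
      = (fun y (e : ↥S) => R' (y e)) '' (PhiMap d a S '' (A ∩ polymerBody d a S)) := by
    rw [Set.image_image, Set.image_image]
    refine Set.image_congr fun x _ => ?_
    funext e
    simp only [PhiMap, hfunc, hR'R]
  -- measurable equivalence induced by R'
  have e' : EuclideanSpace ℝ (Fin d) ≃ᵐ EuclideanSpace ℝ (Fin d) :=
    R'.toHomeomorph.toMeasurableEquiv
  show Measure.pi (fun _ : ↥S => sphMeas d)
        (PhiMap d a S '' (ρ '' A ∩ polymerBody d a S)) = _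
  rw [hset, him]
  have := pi_image_invariance (ι := ↥S) (sphMeas d) R'.toHomeomorph.toMeasurableEquiv
    (fun t => sphMeas_image_invariance R' t)
    (PhiMap d a S '' (A ∩ polymerBody d a S))
  exact this
end
end
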